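/- Let Δ₊ be the semi-simplex category, w : ℕ → Bool, and let J_w be the Grothendieck topology on Δ₊ in which a sieve S on [k] covers if and only if every morphism f : [l] ⟶ [k] with w l = false belongs to S. A presheaf B on Δ₊ is J_w-separated if and only if B is k-simple for every k with w k = true, where: B is 0-simple means B([0]) is a subsingleton, and for k ≥ 1, B is k-simple means the incidence map B([k]) → B([k-1])^{k+1}, x ↦ (B(δ₀)(x), …, B(δ_k)(x)), is injective. -/

import Mathlib

open CategoryTheory Simplicial Opposite CategoryTheory.GrothendieckTopology

universe w

/-- The semi-simplex category: the wide subcategory of `SimplexCategory`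
whose morphisms are the monomorphisms. -/
abbrev SemiSimplexCat : Type :=
  WideSubcategory (MorphismProperty.monomorphisms SimplexCategory)

/-- The coface map `δ i : [k] ⟶ [k+1]` as a morphism of the semi-simplex category. -/
def semiδ {k : ℕ} (i : Fin (k + 2)) : (⟨⦋k⦌⟩ : SemiSimplexCat) ⟶ ⟨⦋k + 1⦌⟩ :=
  ⟨SimplexCategory.δ i, inferInstanceAs (Mono (SimplexCategory.δ i))⟩


universe u

lemma semi_mono {X Y : SemiSimplexCat} (f : X ⟶ Y) : Mono f.1 := f.2

lemma semi_len_le {X Y : SemiSimplexCat} (f : X ⟶ Y) : X.obj.len ≤ Y.obj.len :=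
  @SimplexCategory.len_le_of_mono _ _ f.1 f.2

lemma semi_eq_mk (X : SemiSimplexCat) : X = (⟨⦋X.obj.len⦌⟩ : SemiSimplexCat) := by
  cases X with
  | mk o => simp [SimplexCategory.mk_len]

theorem stmt9 (w : ℕ → Bool) (J : GrothendieckTopology SemiSimplexCat)
    (hJ : ∀ (X : SemiSimplexCat) (S : Sieve X),
      S ∈ J X ↔ ∀ (Y : SemiSimplexCat) (f : Y ⟶ X), w Y.obj.len = false → S.arrows f)
    (B : SemiSimplexCatᵒᵖ ⥤ Type u) :
    Presheaf.IsSeparated J B ↔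
      ((w 0 = true → Subsingleton (B.obj (op (⟨⦋0⦌⟩ : SemiSimplexCat)))) ∧
        ∀ k : ℕ, w (k + 1) = true →
          Function.Injective (fun (x : B.obj (op (⟨⦋k + 1⦌⟩ : SemiSimplexCat)))
            (i : Fin (k + 2)) => B.map (semiδ i).op x)) := by
  constructor
  · intro hsep
    constructor
    · intro hw0
      -- the empty sieve covers [0]
      have hbot : (⊥ : Sieve (⟨⦋0⦌⟩ : SemiSimplexCat)) ∈ J _ := by
        rw [hJ]
        intro Y f hf
        exfalso
        have hle : Y.obj.len ≤ 0 := by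
          simpa [SimplexCategory.len_mk] using semi_len_le f
        rw [Nat.le_zero] at hle
        rw [hle] at hf
        rw [hw0] at hf
        cases hf
      constructor
      intro x y
      exact hsep _ _ hbot x y (fun Y f hf => hf.elim)
    · intro k hwk x y hxy
      -- the sieve of morphisms factoring through some δ i
      let S : Sieve (⟨⦋k + 1⦌⟩ : SemiSimplexCat) :=
        { arrows := fun Y f => ∃ (i : Fin (k + 2)) (g : Y ⟶ ⟨⦋k⦌⟩), f = g ≫ semiδ i
          downward_closed := by
            rintro Y Z f ⟨i, g, rfl⟩ h
            exact ⟨i, h ≫ g, by simp⟩ }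
      have hS : S ∈ J _ := by
        rw [hJ]
        intro Y f hf
        have hmono : Mono f.1 := f.2
        have hinj : Function.Injective f.1.toOrderHom :=
          SimplexCategory.mono_iff_injective.mp hmono
        have hle : Y.obj.len ≤ k + 1 := by
          simpa [SimplexCategory.len_mk] using semi_len_le f
        have hne : Y.obj.len ≠ k + 1 := by
          intro h
          rw [h, hwk] at hf
          cases hf
        have hlt : Y.obj.len < k + 1 := lt_of_le_of_ne hle hne
        have hns : ¬ Function.Surjective f.1.toOrderHom := by
          intro hsurj
          have := Fintype.card_le_of_surjective _ hsurj
          simp only [SimplexCategory.len_mk, Fintype.card_fin] at this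
          omega
        obtain ⟨i, θ', hθ'⟩ := SimplexCategory.eq_comp_δ_of_not_surjective f.1 hns
        have hθm : Mono θ' := by
          have : Mono (θ' ≫ SimplexCategory.δ i) := hθ' ▸ hmono
          exact mono_of_mono θ' (SimplexCategory.δ i)
        exact ⟨i, ⟨θ', hθm⟩, WideSubcategory.hom_ext (h := hθ')⟩
      refine hsep _ _ hS x y ?_
      rintro Y f ⟨i, g, rfl⟩
      have := congrFun hxy i
      simp only at this
      show B.map (g ≫ semiδ i).op x = B.map (g ≫ semiδ i).op y
      rw [op_comp, FunctorToTypes.map_comp_apply, FunctorToTypes.map_comp_apply, this]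
  · rintro ⟨h0, hk⟩
    -- main induction
    have main : ∀ n : ℕ, ∀ (S : Sieve (⟨⦋n⦌⟩ : SemiSimplexCat)),
        (∀ (Y : SemiSimplexCat) (f : Y ⟶ ⟨⦋n⦌⟩), w Y.obj.len = false → S.arrows f) →
        ∀ x y : B.obj (op (⟨⦋n⦌⟩ : SemiSimplexCat)),
          (∀ (Y : SemiSimplexCat) (f : Y ⟶ ⟨⦋n⦌⟩), S.arrows f →
            B.map f.op x = B.map f.op y) → x = y := by
      intro n
      induction n using Nat.strong_induction_on with
      | _ n IH =>
        intro S hS x y hxy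
        by_cases hwn : w n = true
        · match n, hwn with
          | 0, hwn =>
            have := h0 hwn
            exact Subsingleton.elim x y
          | (m + 1), hwn =>
            apply hk m hwn
            funext i
            simp only
            apply IH m (Nat.lt_succ_self m) (S.pullback (semiδ i))
            · intro Y g hg
              exact hS Y (g ≫ semiδ i) hg
            · intro Y g hg
              have : B.map (g ≫ semiδ i).op x = B.map (g ≫ semiδ i).op y :=
                hxy Y (g ≫ semiδ i) hg
              rw [op_comp, FunctorToTypes.map_comp_apply, FunctorToTypes.map_comp_apply] at this
              exact this
        · have hwn' : w n = false := by
            cases h : w n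
            · rfl
            · exact absurd h hwn
          have hid : S.arrows (𝟙 (⟨⦋n⦌⟩ : SemiSimplexCat)) := by
            apply hS
            simpa using hwn'
          have := hxy _ (𝟙 _) hid
          simpa using this
    intro X S hS x y hxy
    rw [hJ] at hS
    obtain ⟨o⟩ := X
    obtain ⟨n, hn⟩ : ∃ n, o.len = n := ⟨_, rfl⟩
    have h : SimplexCategory.mk n = o := by rw [← hn]
    subst h
    exact main n S hS x y hxy
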